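/- Let Ω ⊂ ℝ^m be a measurable set with Lebesgue measure λ, let P and 𝒫̂ be parameter sets, let γ ≥ 0, C ≥ 0, c > 0, ρ > 1, d ≥ 2, and n ≥ 1. Fix μ ∈ P and μ̂ ∈ 𝒫̂, let N ⊂ 𝒫̂ be a finite set of interpolation points, and for each η̂ ∈ N let ℓ_{η̂}(μ̂) ∈ ℝ be the Lagrange weight, φ₁^{η̂} : Ω → Ω a measurable transform with (φ₁^{η̂})_* λ (A) ≤ γ·λ(A) for all measurable A, and φ₂^{η̂} ∈ P. Define, for w : Ω × P × 𝒫̂ → ℝ, the operator (T₂ w)(x, μ, μ̂) := Σ_{η̂ ∈ N} ℓ_{η̂}(μ̂) · w(φ₁^{η̂}(x), φ₂^{η̂}, η̂), and let Λ_n := Σ_{η̂ ∈ N} |ℓ_{η̂}(μ̂)|. Assume u, v : Ω × P × 𝒫̂ → ℝ satisfy: (i) ‖u(·, μ, μ̂) − (T₂ u)(·, μ, μ̂)‖_{L¹(Ω)} ≤ C·ρ^{−n^{1/(d−1)}}; and (ii) ‖u(·, μ', η̂) − v(·, μ', η̂)‖_{L¹(Ω)} ≤ C·ρ^{−c·n^{1/2}}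 for all μ' ∈ P and η̂ ∈ N. Then ‖u(·, μ, μ̂) − (T₂ v)(·, μ, μ̂)‖_{L¹(Ω)} ≤ C·γ·Λ_n·ρ^{−c·n^{1/2}} + C·ρ^{−n^{1/(d−1)}}. -/

import Mathlib

open MeasureTheory

lemma stmt11_key {m : ℕ} (Ω : Set (EuclideanSpace ℝ (Fin m))) (hΩ : MeasurableSet Ω)
    (γ : ℝ) (hγ : 0 ≤ γ)
    (φ : EuclideanSpace ℝ (Fin m) → EuclideanSpace ℝ (Fin m))
    (hφ : Measurable φ) (hmaps : Set.MapsTo φ Ω Ω)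
    (hpush : ∀ A : Set (EuclideanSpace ℝ (Fin m)), A ⊆ Ω → MeasurableSet A →
      volume (Ω ∩ φ ⁻¹' A) ≤ ENNReal.ofReal γ * volume A)
    (f : EuclideanSpace ℝ (Fin m) → ℝ) (hf : IntegrableOn f Ω) :
    IntegrableOn (fun x => f (φ x)) Ω ∧
      ∫ x in Ω, |f (φ x)| ≤ γ * ∫ x in Ω, |f x| := by
  set ν := Measure.map φ (volume.restrict Ω) with hν
  have hνle : ν ≤ ENNReal.ofReal γ • volume.restrict Ω := by
    refine Measure.le_iff.mpr (fun A hA => ?_)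
    rw [hν, Measure.map_apply hφ hA, Measure.restrict_apply (hφ hA)]
    have hset : φ ⁻¹' A ∩ Ω = Ω ∩ φ ⁻¹' (A ∩ Ω) := by
      ext x
      constructor
      · rintro ⟨hxA, hxΩ⟩; exact ⟨hxΩ, hxA, hmaps hxΩ⟩
      · rintro ⟨hxΩ, hxA, _⟩; exact ⟨hxA, hxΩ⟩
    rw [hset]
    calc volume (Ω ∩ φ ⁻¹' (A ∩ Ω)) ≤ ENNReal.ofReal γ * volume (A ∩ Ω) :=
          hpush _ Set.inter_subset_right (hA.inter hΩ)
      _ = (ENNReal.ofReal γ • volume.restrict Ω) A := by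
          rw [Measure.smul_apply, Measure.restrict_apply hA, smul_eq_mul]
  have hac : ν ≪ volume.restrict Ω :=
    (Measure.absolutelyContinuous_of_le hνle).trans (Measure.absolutelyContinuous_of_le_smul le_rfl)
  have hfm : AEStronglyMeasurable f ν := hf.aestronglyMeasurable.mono_ac hac
  have hcomp_m : AEStronglyMeasurable (fun x => f (φ x)) (volume.restrict Ω) :=
    hfm.comp_measurable hφ
  have hlin : ∫⁻ x in Ω, ‖f (φ x)‖₊ = ∫⁻ y, ‖f y‖₊ ∂ν :=
    (lintegral_map' hfm.nnnorm.aemeasurable.coe_nnreal_ennreal hφ.aemeasurable).symm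
  have hbound : ∫⁻ y, ‖f y‖₊ ∂ν ≤ ENNReal.ofReal γ * ∫⁻ x in Ω, ‖f x‖₊ := by
    calc ∫⁻ y, ‖f y‖₊ ∂ν ≤ ∫⁻ y, ‖f y‖₊ ∂(ENNReal.ofReal γ • volume.restrict Ω) :=
          lintegral_mono' hνle le_rfl
      _ = ENNReal.ofReal γ * ∫⁻ x in Ω, ‖f x‖₊ := lintegral_smul_measure _ _
  have hffin : ∫⁻ x in Ω, ‖f x‖₊ < ⊤ := hf.2
  have hfin : HasFiniteIntegral (fun x => f (φ x)) (volume.restrict Ω) := by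
    rw [HasFiniteIntegral]
    calc ∫⁻ x in Ω, ‖f (φ x)‖₊ ≤ ENNReal.ofReal γ * ∫⁻ x in Ω, ‖f x‖₊ := hlin ▸ hbound
      _ < ⊤ := ENNReal.mul_lt_top ENNReal.ofReal_lt_top hffin
  refine ⟨⟨hcomp_m, hfin⟩, ?_⟩
  have h1 : ∫ x in Ω, |f (φ x)| = (∫⁻ x in Ω, ‖f (φ x)‖₊).toReal := by
    simpa [Real.norm_eq_abs, enorm_eq_nnnorm] using integral_norm_eq_lintegral_enorm hcomp_m
  have h2 : ∫ x in Ω, |f x| = (∫⁻ x in Ω, ‖f x‖₊).toReal := by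
    simpa [Real.norm_eq_abs, enorm_eq_nnnorm] using integral_norm_eq_lintegral_enorm hf.aestronglyMeasurable
  rw [h1, h2]
  have hne : ENNReal.ofReal γ * ∫⁻ x in Ω, ‖f x‖₊ ≠ ⊤ :=
    ENNReal.mul_ne_top ENNReal.ofReal_ne_top hffin.ne
  calc (∫⁻ x in Ω, ‖f (φ x)‖₊).toReal
      ≤ (ENNReal.ofReal γ * ∫⁻ x in Ω, ‖f x‖₊).toReal :=
        ENNReal.toReal_mono hne (hlin ▸ hbound)
    _ = γ * (∫⁻ x in Ω, ‖f x‖₊).toReal := by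
        rw [ENNReal.toReal_mul, ENNReal.toReal_ofReal hγ]

/-- combination of the stability of the second-component transformed
snapshot interpolation `T₂` with the error bounds of both component TSIs:
`‖u − T₂ v‖_{L¹(Ω)} ≤ C·γ·Λ_n·ρ^{−c·√n} + C·ρ^{−n^{1/(d−1)}}`, where
`Λ_n = Σ_{η̂ ∈ N} |ℓ_{η̂}(μ̂)|` is the Lebesgue constant. -/
theorem stmt11 {m : ℕ} {P Phat : Type*} (Ω : Set (EuclideanSpace ℝ (Fin m)))
    (hΩ : MeasurableSet Ω)
    (γ C c ρ : ℝ) (d n : ℕ)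
    (hγ : 0 ≤ γ) (hC : 0 ≤ C) (hc : 0 < c) (hρ : 1 < ρ) (hd : 2 ≤ d) (hn : 1 ≤ n)
    (μ : P) (μhat : Phat) (N : Finset Phat)
    (ℓw : Phat → ℝ)
    (φ₁ : Phat → EuclideanSpace ℝ (Fin m) → EuclideanSpace ℝ (Fin m))
    (φ₂ : Phat → P)
    (hmeas : ∀ i ∈ N, Measurable (φ₁ i))
    (hmapsto : ∀ i ∈ N, Set.MapsTo (φ₁ i) Ω Ω)
    (hpush : ∀ i ∈ N, ∀ A : Set (EuclideanSpace ℝ (Fin m)), A ⊆ Ω → MeasurableSet A →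
      volume (Ω ∩ φ₁ i ⁻¹' A) ≤ ENNReal.ofReal γ * volume A)
    (u v : EuclideanSpace ℝ (Fin m) → P → Phat → ℝ)
    (hu : ∀ (μ' : P) (i : Phat), IntegrableOn (fun x => u x μ' i) Ω)
    (hv : ∀ (μ' : P) (i : Phat), IntegrableOn (fun x => v x μ' i) Ω)
    (hi : ∫ x in Ω, |u x μ μhat - ∑ i ∈ N, ℓw i * u (φ₁ i x) (φ₂ i) i| ≤
      C * ρ ^ (-((n : ℝ) ^ ((1:ℝ) / ((d : ℝ) - 1)))))
    (hii : ∀ (μ' : P), ∀ i ∈ N,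
      ∫ x in Ω, |u x μ' i - v x μ' i| ≤ C * ρ ^ (-(c * Real.sqrt (n : ℝ)))) :
    ∫ x in Ω, |u x μ μhat - ∑ i ∈ N, ℓw i * v (φ₁ i x) (φ₂ i) i| ≤
      C * γ * (∑ i ∈ N, |ℓw i|) * ρ ^ (-(c * Real.sqrt (n : ℝ))) +
        C * ρ ^ (-((n : ℝ) ^ ((1:ℝ) / ((d : ℝ) - 1)))) := by
  -- key lemma instances
  have keyu : ∀ i ∈ N, IntegrableOn (fun x => u (φ₁ i x) (φ₂ i) i) Ω := fun i hiN =>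
    (stmt11_key Ω hΩ γ hγ (φ₁ i) (hmeas i hiN) (hmapsto i hiN) (hpush i hiN)
      (fun x => u x (φ₂ i) i) (hu _ i)).1
  have keyv : ∀ i ∈ N, IntegrableOn (fun x => v (φ₁ i x) (φ₂ i) i) Ω := fun i hiN =>
    (stmt11_key Ω hΩ γ hγ (φ₁ i) (hmeas i hiN) (hmapsto i hiN) (hpush i hiN)
      (fun x => v x (φ₂ i) i) (hv _ i)).1
  have keyd := fun i (hiN : i ∈ N) =>
    stmt11_key Ω hΩ γ hγ (φ₁ i) (hmeas i hiN) (hmapsto i hiN) (hpush i hiN)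
      (fun x => u x (φ₂ i) i - v x (φ₂ i) i) ((hu _ i).sub (hv _ i))
  -- integrability facts
  have Iu : IntegrableOn (fun x => u x μ μhat) Ω := hu μ μhat
  have ITu : IntegrableOn (fun x => ∑ i ∈ N, ℓw i * u (φ₁ i x) (φ₂ i) i) Ω :=
    integrable_finset_sum _ (fun i hiN => (keyu i hiN).const_mul _)
  have ITv : IntegrableOn (fun x => ∑ i ∈ N, ℓw i * v (φ₁ i x) (φ₂ i) i) Ω :=
    integrable_finset_sum _ (fun i hiN => (keyv i hiN).const_mul _)
  have Idφ : ∀ i ∈ N, IntegrableOn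
      (fun x => |u (φ₁ i x) (φ₂ i) i - v (φ₁ i x) (φ₂ i) i|) Ω := fun i hiN =>
    (keyd i hiN).1.abs
  -- pointwise bound
  have hptwise : ∀ x, |u x μ μhat - ∑ i ∈ N, ℓw i * v (φ₁ i x) (φ₂ i) i| ≤
      |u x μ μhat - ∑ i ∈ N, ℓw i * u (φ₁ i x) (φ₂ i) i| +
        ∑ i ∈ N, |ℓw i| * |u (φ₁ i x) (φ₂ i) i - v (φ₁ i x) (φ₂ i) i| := by
    intro x
    have e : ∑ i ∈ N, ℓw i * (u (φ₁ i x) (φ₂ i) i - v (φ₁ i x) (φ₂ i) i) =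
        (∑ i ∈ N, ℓw i * u (φ₁ i x) (φ₂ i) i) -
          ∑ i ∈ N, ℓw i * v (φ₁ i x) (φ₂ i) i := by
      rw [← Finset.sum_sub_distrib]
      exact Finset.sum_congr rfl (fun i _ => by ring)
    calc |u x μ μhat - ∑ i ∈ N, ℓw i * v (φ₁ i x) (φ₂ i) i|
        = |(u x μ μhat - ∑ i ∈ N, ℓw i * u (φ₁ i x) (φ₂ i) i) +
            ∑ i ∈ N, ℓw i * (u (φ₁ i x) (φ₂ i) i - v (φ₁ i x) (φ₂ i) i)| := by
          rw [e]; ring_nf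
      _ ≤ |u x μ μhat - ∑ i ∈ N, ℓw i * u (φ₁ i x) (φ₂ i) i| +
            |∑ i ∈ N, ℓw i * (u (φ₁ i x) (φ₂ i) i - v (φ₁ i x) (φ₂ i) i)| := abs_add_le _ _
      _ ≤ _ := by
          gcongr
          calc |∑ i ∈ N, ℓw i * (u (φ₁ i x) (φ₂ i) i - v (φ₁ i x) (φ₂ i) i)|
              ≤ ∑ i ∈ N, |ℓw i * (u (φ₁ i x) (φ₂ i) i - v (φ₁ i x) (φ₂ i) i)| :=
                Finset.abs_sum_le_sum_abs _ _
            _ = ∑ i ∈ N, |ℓw i| * |u (φ₁ i x) (φ₂ i) i - v (φ₁ i x) (φ₂ i) i| := by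
                exact Finset.sum_congr rfl (fun i _ => abs_mul _ _)
  -- integrate
  have hint : ∫ x in Ω, |u x μ μhat - ∑ i ∈ N, ℓw i * v (φ₁ i x) (φ₂ i) i| ≤
      ∫ x in Ω, (|u x μ μhat - ∑ i ∈ N, ℓw i * u (φ₁ i x) (φ₂ i) i| +
        ∑ i ∈ N, |ℓw i| * |u (φ₁ i x) (φ₂ i) i - v (φ₁ i x) (φ₂ i) i|) := by
    refine integral_mono ((Iu.sub ITv).abs) ?_ (fun x => hptwise x)
    exact (Iu.sub ITu).abs.add
      (integrable_finset_sum _ (fun i hiN => (Idφ i hiN).const_mul _))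
  have hsplit : ∫ x in Ω, (|u x μ μhat - ∑ i ∈ N, ℓw i * u (φ₁ i x) (φ₂ i) i| +
        ∑ i ∈ N, |ℓw i| * |u (φ₁ i x) (φ₂ i) i - v (φ₁ i x) (φ₂ i) i|) =
      (∫ x in Ω, |u x μ μhat - ∑ i ∈ N, ℓw i * u (φ₁ i x) (φ₂ i) i|) +
        ∑ i ∈ N, |ℓw i| * ∫ x in Ω, |u (φ₁ i x) (φ₂ i) i - v (φ₁ i x) (φ₂ i) i| := by
    have h1 : IntegrableOn
        (fun x => |u x μ μhat - ∑ i ∈ N, ℓw i * u (φ₁ i x) (φ₂ i) i|) Ω :=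
      (Iu.sub ITu).abs
    have h2 : IntegrableOn
        (fun x => ∑ i ∈ N, |ℓw i| * |u (φ₁ i x) (φ₂ i) i - v (φ₁ i x) (φ₂ i) i|) Ω :=
      integrable_finset_sum _ (fun i hiN => (Idφ i hiN).const_mul _)
    rw [integral_add h1 h2,
      integral_finset_sum _ (fun i hiN => (Idφ i hiN).const_mul _)]
    congr 1
    exact Finset.sum_congr rfl (fun i _ => integral_const_mul _ _)
  -- bound the sum
  have hsum : ∑ i ∈ N, |ℓw i| * ∫ x in Ω, |u (φ₁ i x) (φ₂ i) i - v (φ₁ i x) (φ₂ i) i| ≤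
      (∑ i ∈ N, |ℓw i|) * (γ * (C * ρ ^ (-(c * Real.sqrt (n : ℝ))))) := by
    rw [Finset.sum_mul]
    refine Finset.sum_le_sum (fun i hiN => ?_)
    refine mul_le_mul_of_nonneg_left ?_ (abs_nonneg _)
    calc ∫ x in Ω, |u (φ₁ i x) (φ₂ i) i - v (φ₁ i x) (φ₂ i) i|
        ≤ γ * ∫ x in Ω, |u x (φ₂ i) i - v x (φ₂ i) i| := (keyd i hiN).2
      _ ≤ γ * (C * ρ ^ (-(c * Real.sqrt (n : ℝ)))) :=
          mul_le_mul_of_nonneg_left (hii (φ₂ i) i hiN) hγ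
  calc ∫ x in Ω, |u x μ μhat - ∑ i ∈ N, ℓw i * v (φ₁ i x) (φ₂ i) i|
      ≤ (∫ x in Ω, |u x μ μhat - ∑ i ∈ N, ℓw i * u (φ₁ i x) (φ₂ i) i|) +
        ∑ i ∈ N, |ℓw i| * ∫ x in Ω, |u (φ₁ i x) (φ₂ i) i - v (φ₁ i x) (φ₂ i) i| :=
        hsplit ▸ hint
    _ ≤ C * ρ ^ (-((n : ℝ) ^ ((1:ℝ) / ((d : ℝ) - 1)))) +
        (∑ i ∈ N, |ℓw i|) * (γ * (C * ρ ^ (-(c * Real.sqrt (n : ℝ))))) :=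
        add_le_add hi hsum
    _ = C * γ * (∑ i ∈ N, |ℓw i|) * ρ ^ (-(c * Real.sqrt (n : ℝ))) +
        C * ρ ^ (-((n : ℝ) ^ ((1:ℝ) / ((d : ℝ) - 1)))) := by ring
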